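/- The polynomial C_{p_1,p_2}(X_0,X_1,X_2) lies in the ideal (X_0,X_1,X_2)^m of ℚ[X_0,X_1,X_2], where m = min{p_1,p_2}; in particular it has no monomials of total degree less than min{p_1,p_2}. -/
import Mathlib


open MvPolynomial

/-- The polynomial
`C_{p₁,p₂} = C_{p₂}(X₀^{p₁}, p₁X₁)/p₁ - C_{p₁}(X₀^{p₂}, p₂X₂)/p₂
  - (δ_{p₁}p₂/p₂)X₂^{p₁} + (δ_{p₂}p₁/p₁)X₁^{p₂}`
(where `C_p(X,Y) = (X^p+Y^p-(X+Y)^p)/p` and `δ_p(a) = (a-a^p)/p`) lies in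
`(X₀,X₁,X₂)^{min{p₁,p₂}}` in `ℚ[X₀,X₁,X₂]`. -/
theorem stmt_5 (p₁ p₂ : ℕ) (hp₁ : p₁.Prime) (hp₂ : p₂.Prime) (hne : p₁ ≠ p₂) :
    (((p₁ : ℚ) * p₂)⁻¹ •
        (((X 0) ^ p₁) ^ p₂ + ((p₁ : ℚ) • X 1) ^ p₂
          - ((X 0) ^ p₁ + (p₁ : ℚ) • X 1) ^ p₂)
      - ((p₁ : ℚ) * p₂)⁻¹ •
        (((X 0) ^ p₂) ^ p₁ + ((p₂ : ℚ) • X 2) ^ p₁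
          - ((X 0) ^ p₂ + (p₂ : ℚ) • X 2) ^ p₁)
      - (((p₂ : ℚ) - (p₂ : ℚ) ^ p₁) / ((p₁ : ℚ) * p₂)) • (X 2) ^ p₁
      + (((p₁ : ℚ) - (p₁ : ℚ) ^ p₂) / ((p₁ : ℚ) * p₂)) • (X 1) ^ p₂
      : MvPolynomial (Fin 3) ℚ)
    ∈ (Ideal.span ({X 0, X 1, X 2} : Set (MvPolynomial (Fin 3) ℚ))) ^ (min p₁ p₂) := by
  set I : Ideal (MvPolynomial (Fin 3) ℚ) := Ideal.span {X 0, X 1, X 2} with hI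
  have h0 : (X 0 : MvPolynomial (Fin 3) ℚ) ∈ I := Ideal.subset_span (by simp)
  have h1 : (X 1 : MvPolynomial (Fin 3) ℚ) ∈ I := Ideal.subset_span (by simp)
  have h2 : (X 2 : MvPolynomial (Fin 3) ℚ) ∈ I := Ideal.subset_span (by simp)
  have le1 : I ^ p₁ ≤ I ^ (min p₁ p₂) := Ideal.pow_le_pow_right (min_le_left _ _)
  have le2 : I ^ p₂ ≤ I ^ (min p₁ p₂) := Ideal.pow_le_pow_right (min_le_right _ _)
  have hX0p1 : (X 0 : MvPolynomial (Fin 3) ℚ) ^ p₁ ∈ I :=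
    I.pow_mem_of_mem h0 _ hp₁.pos
  have hX0p2 : (X 0 : MvPolynomial (Fin 3) ℚ) ^ p₂ ∈ I :=
    I.pow_mem_of_mem h0 _ hp₂.pos
  have hs1 : ((p₁ : ℚ) • X 1 : MvPolynomial (Fin 3) ℚ) ∈ I := Submodule.smul_of_tower_mem _ _ h1
  have hs2 : ((p₂ : ℚ) • X 2 : MvPolynomial (Fin 3) ℚ) ∈ I := Submodule.smul_of_tower_mem _ _ h2
  refine Submodule.add_mem _ (Submodule.sub_mem _ (Submodule.sub_mem _ ?_ ?_) ?_) ?_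
  · refine Submodule.smul_of_tower_mem _ _ (Submodule.sub_mem _ (Submodule.add_mem _ ?_ ?_) ?_)
    · exact le2 (Ideal.pow_mem_pow hX0p1 _)
    · exact le2 (Ideal.pow_mem_pow hs1 _)
    · exact le2 (Ideal.pow_mem_pow (Submodule.add_mem _ hX0p1 hs1) _)
  · refine Submodule.smul_of_tower_mem _ _ (Submodule.sub_mem _ (Submodule.add_mem _ ?_ ?_) ?_)
    · exact le1 (Ideal.pow_mem_pow hX0p2 _)
    · exact le1 (Ideal.pow_mem_pow hs2 _)
    · exact le1 (Ideal.pow_mem_pow (Submodule.add_mem _ hX0p2 hs2) _)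
  · exact Submodule.smul_of_tower_mem _ _ (le1 (Ideal.pow_mem_pow h2 _))
  · exact Submodule.smul_of_tower_mem _ _ (le2 (Ideal.pow_mem_pow h1 _))
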